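/- Let V be a real inner product space, let G be a finite group acting on V by linear isometries, let G₀ ⊆ G be a subset, and let η : ℝ → ℝ satisfy η(0) = 0. Suppose x, w ∈ V and g₀ ∈ G are such that ⟨x, g • w⟩ = 0 for every g ∉ G₀ and ⟨g₀ • x, g • w⟩ = 0 for every g ∉ G₀ (localization condition). Then the partially pooled signature is exactly invariant: Σ_{g ∈ G₀} η(⟨g₀ • x, g • w⟩) = Σ_{g ∈ G₀} η(⟨x, g • w⟩). -/
import Mathlib


open RealInnerProductSpace

/-- Localization implies exact invariance of the partially pooled signature: if the dot
products of `x` and of `g₀ • x` with all transformed templates `g • w` outside the pooling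
range `G₀` vanish, and `η(0) = 0`, then
`Σ_{g ∈ G₀} η(⟨g₀ • x, g • w⟩) = Σ_{g ∈ G₀} η(⟨x, g • w⟩)`. -/
theorem partially_pooled_signature_invariant_of_localization
    {V : Type*} [NormedAddCommGroup V] [InnerProductSpace ℝ V]
    {G : Type*} [Group G] [Fintype G] (ρ : G →* (V ≃ₗᵢ[ℝ] V))
    (G₀ : Finset G) (η : ℝ → ℝ) (hη : η 0 = 0)
    (x w : V) (g₀ : G)
    (hloc : ∀ g ∉ G₀, ⟪x, ρ g w⟫ = 0)
    (hloc' : ∀ g ∉ G₀, ⟪ρ g₀ x, ρ g w⟫ = 0) :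
    (∑ g ∈ G₀, η ⟪ρ g₀ x, ρ g w⟫) = ∑ g ∈ G₀, η ⟪x, ρ g w⟫ := by
  have key : ∀ g : G, ⟪ρ g₀ x, ρ g w⟫ = ⟪x, ρ (g₀⁻¹ * g) w⟫ := by
    intro g
    have := (ρ g₀).inner_map_map x (ρ (g₀⁻¹ * g) w)
    rw [← this]
    congr 1
    have : ρ g₀ (ρ (g₀⁻¹ * g) w) = ρ (g₀ * (g₀⁻¹ * g)) w := by
      simp [map_mul]
    rw [this]
    simp
  calc (∑ g ∈ G₀, η ⟪ρ g₀ x, ρ g w⟫)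
      = ∑ g : G, η ⟪ρ g₀ x, ρ g w⟫ := by
        refine Finset.sum_subset (Finset.subset_univ _) ?_
        intro g _ hg
        rw [hloc' g hg, hη]
    _ = ∑ g : G, η ⟪x, ρ (g₀⁻¹ * g) w⟫ :=
        Finset.sum_congr rfl fun g _ => by rw [key]
    _ = ∑ g : G, η ⟪x, ρ g w⟫ :=
        Fintype.sum_equiv (Equiv.mulLeft g₀⁻¹) (fun g => η ⟪x, ρ (g₀⁻¹ * g) w⟫)
          (fun g => η ⟪x, ρ g w⟫) (fun g => rfl)
    _ = ∑ g ∈ G₀, η ⟪x, ρ g w⟫ := by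
        refine (Finset.sum_subset (Finset.subset_univ _) ?_).symm
        intro g _ hg
        rw [hloc g hg, hη]
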